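/- Let λ(d) = t_min(d)/t_max(d) = 1/(d−1), and let N_λ be the affine map N_λ(x) = λ x + (1−λ) π, where π is the uniform vector. Then for every orthogonal transformation O of ℝ^d fixing the all-ones vector, and every x in the probability simplex Δ^(d), the point N_λ(O(x)) lies in Δ^(d). -/

import Mathlib

open scoped RealInnerProductSpace

/-- The uniform vector `π = (1/d,…,1/d)` in Euclidean space `ℝ^d`. -/
noncomputable def unifVec (d : ℕ) : EuclideanSpace ℝ (Fin d) := WithLp.toLp 2 (fun _ => (d : ℝ)⁻¹)

/-- The all-ones vector in Euclidean space `ℝ^d`. -/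
def onesVec (d : ℕ) : EuclideanSpace ℝ (Fin d) := WithLp.toLp 2 (fun _ => (1 : ℝ))

/-- With `λ(d) = t_min(d)/t_max(d) = 1/(d−1)` and `N_λ(x) = λ x + (1−λ) π` (with `π` the
uniform vector), for every orthogonal transformation `O` of `ℝ^d` fixing the all-ones
vector and every `x` in the probability simplex, `N_λ(O(x))` lies in the simplex. -/
theorem stmt_3 (d : ℕ) (hd : 2 ≤ d)
    (O : EuclideanSpace ℝ (Fin d) ≃ₗᵢ[ℝ] EuclideanSpace ℝ (Fin d))
    (hO : O (onesVec d) = onesVec d)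
    (x : EuclideanSpace ℝ (Fin d)) (hx0 : ∀ i, 0 ≤ x i) (hx1 : ∑ i, x i = 1) :
    (∀ i, 0 ≤ ((((d : ℝ) - 1)⁻¹) • (O x)
        + (1 - ((d : ℝ) - 1)⁻¹) • unifVec d) i)
    ∧ ∑ i, ((((d : ℝ) - 1)⁻¹) • (O x)
        + (1 - ((d : ℝ) - 1)⁻¹) • unifVec d) i = 1 := by
  have hd2 : (2:ℝ) ≤ (d:ℝ) := by exact_mod_cast hd
  have hdpos : (0:ℝ) < d := by linarith
  have hdne : (d:ℝ) ≠ 0 := ne_of_gt hdpos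
  have hd1pos : (0:ℝ) < (d:ℝ) - 1 := by linarith
  have hd1ne : (d:ℝ) - 1 ≠ 0 := ne_of_gt hd1pos
  -- inner product with ones vector equals coordinate sum
  have hinner : ∀ y : EuclideanSpace ℝ (Fin d), ⟪y, onesVec d⟫ = ∑ i, y i := by
    intro y
    simp [PiLp.inner_apply, onesVec]
  -- O preserves the sum
  have hsumO : ∑ i, O x i = 1 := by
    have h := O.inner_map_map x (onesVec d)
    rw [hO, hinner, hinner] at h
    rw [h, hx1]
  -- O fixes the uniform vector
  have hunif : unifVec d = (d:ℝ)⁻¹ • onesVec d := by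
    ext j; simp [unifVec, onesVec]
  have hOpi : O (unifVec d) = unifVec d := by
    rw [hunif, map_smul, hO]
  -- each x i ≤ 1
  have hxle : ∀ i, x i ≤ 1 := by
    intro i
    calc x i ≤ ∑ j, x j := Finset.single_le_sum (fun j _ => hx0 j) (Finset.mem_univ i)
    _ = 1 := hx1
  -- norm squared of x - π is at most (d-1)/d
  have hnormsq : ‖x - unifVec d‖^2 ≤ ((d:ℝ)-1)/d := by
    have h1 : ‖x - unifVec d‖^2 = ∑ i, (x i - (d:ℝ)⁻¹)^2 := by
      rw [← real_inner_self_eq_norm_sq]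
      rw [PiLp.inner_apply]
      simp [PiLp.inner_apply, PiLp.sub_apply, unifVec, sq]
    rw [h1]
    have h2 : ∀ i : Fin d, (x i - (d:ℝ)⁻¹)^2 = (x i)^2 - 2*(d:ℝ)⁻¹ * x i + (d:ℝ)⁻¹^2 := by
      intro i; ring
    rw [Finset.sum_congr rfl (fun i _ => h2 i)]
    rw [Finset.sum_add_distrib, Finset.sum_sub_distrib, ← Finset.mul_sum, hx1]
    have h3 : ∑ i : Fin d, (x i)^2 ≤ 1 := by
      calc ∑ i : Fin d, (x i)^2 ≤ ∑ i, x i := by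
            apply Finset.sum_le_sum
            intro i _
            nlinarith [hx0 i, hxle i]
      _ = 1 := hx1
    have h4 : ∑ _i : Fin d, (d:ℝ)⁻¹^2 = (d:ℝ)⁻¹ := by
      rw [Finset.sum_const, Finset.card_univ, Fintype.card_fin, nsmul_eq_mul]
      field_simp
    rw [h4]
    have e : ((d:ℝ)-1)/d = 1 - (d:ℝ)⁻¹ := by field_simp
    rw [e]
    linarith [h3]
  -- key pointwise lower bound for O x
  have hkey : ∀ i, -(((d:ℝ)-1)/d) ≤ O x i - (d:ℝ)⁻¹ := by
    intro i
    set v : EuclideanSpace ℝ (Fin d) := O x - unifVec d with hv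
    have hvi : v i = O x i - (d:ℝ)⁻¹ := by simp [hv, unifVec]
    have hvsum : ∑ j, v j = 0 := by
      have : ∀ j, v j = O x j - (d:ℝ)⁻¹ := fun j => by simp [hv, unifVec]
      rw [Finset.sum_congr rfl (fun j _ => this j), Finset.sum_sub_distrib, hsumO,
        Finset.sum_const, Finset.card_univ, Fintype.card_fin, nsmul_eq_mul]
      field_simp
      ring
    -- v has the same norm as x - π
    have hvnorm : ‖v‖ = ‖x - unifVec d‖ := by
      rw [hv, show O x - unifVec d = O (x - unifVec d) by rw [map_sub, hOpi]]
      exact O.norm_map _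
    have hvn2 : ‖v‖^2 ≤ ((d:ℝ)-1)/d := by rw [hvnorm]; exact hnormsq
    -- the Cauchy–Schwarz witness vector
    set u : EuclideanSpace ℝ (Fin d) := WithLp.toLp 2 (fun j => if j = i then -(((d:ℝ)-1)/d) else (d:ℝ)⁻¹) with hu
    have huv : ⟪u, v⟫ = -(v i) := by
      have hterm : ∀ j, u j * v j = (d:ℝ)⁻¹ * v j + (if j = i then -(v i) else 0) := by
        intro j
        by_cases h : j = i
        · subst h; simp [hu]; field_simp; ring
        · simp [hu, h]
      rw [PiLp.inner_apply]
      simp only [RCLike.inner_apply, starRingEnd_apply, star_trivial]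
      rw [Finset.sum_congr rfl (fun j _ => mul_comm (v j) (u j))]
      rw [Finset.sum_congr rfl (fun j _ => hterm j), Finset.sum_add_distrib, ← Finset.mul_sum,
        hvsum, Finset.sum_ite_eq' Finset.univ i (fun _ => -(v i))]
      simp
    have hun2 : ‖u‖^2 = ((d:ℝ)-1)/d := by
      rw [← real_inner_self_eq_norm_sq, PiLp.inner_apply]
      simp only [RCLike.inner_apply, starRingEnd_apply, star_trivial]
      have hterm : ∀ j, u j * u j = (d:ℝ)⁻¹^2 + (if j = i then (((d:ℝ)-1)/d)^2 - (d:ℝ)⁻¹^2 else 0) := by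
        intro j
        by_cases h : j = i
        · subst h; simp [hu]; ring
        · simp [hu, h]; ring
      rw [Finset.sum_congr rfl (fun j _ => hterm j), Finset.sum_add_distrib,
        Finset.sum_ite_eq' Finset.univ i (fun _ => (((d:ℝ)-1)/d)^2 - (d:ℝ)⁻¹^2),
        Finset.sum_const, Finset.card_univ, Fintype.card_fin, nsmul_eq_mul]
      simp only [Finset.mem_univ, if_true]
      field_simp
      ring
    have hcs : -(v i) ≤ ‖u‖ * ‖v‖ := huv ▸ real_inner_le_norm u v
    have hbound : ‖u‖ * ‖v‖ ≤ ((d:ℝ)-1)/d := by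
      have hnn : (0:ℝ) ≤ ((d:ℝ)-1)/d := by positivity
      nlinarith [norm_nonneg u, norm_nonneg v, hun2, hvn2,
        sq_nonneg (‖u‖ - ‖v‖), sq_nonneg (‖u‖ * ‖v‖ - ((d:ℝ)-1)/d)]
    have hfin := hcs.trans hbound
    rw [hvi] at hfin
    linarith
  constructor
  · intro i
    have h := hkey i
    simp only [PiLp.add_apply, PiLp.smul_apply, smul_eq_mul, unifVec]
    have hlpos : (0:ℝ) < ((d:ℝ)-1)⁻¹ := inv_pos.mpr hd1pos
    have h2 : O x i ≥ (d:ℝ)⁻¹ - ((d:ℝ)-1)/d := by linarith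
    have : ((d:ℝ)-1)⁻¹ * ((d:ℝ)⁻¹ - ((d:ℝ)-1)/d) + (1 - ((d:ℝ)-1)⁻¹) * (d:ℝ)⁻¹ = 0 := by
      field_simp
      ring
    nlinarith [mul_le_mul_of_nonneg_left h2 (le_of_lt hlpos)]
  · have hpt : ∀ i : Fin d, ((((d:ℝ)-1)⁻¹) • O x + (1 - ((d:ℝ)-1)⁻¹) • unifVec d) i
        = ((d:ℝ)-1)⁻¹ * O x i + (1 - ((d:ℝ)-1)⁻¹) * (d:ℝ)⁻¹ := by
      intro i
      simp [unifVec]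
    rw [Finset.sum_congr rfl (fun i _ => hpt i), Finset.sum_add_distrib, ← Finset.mul_sum, hsumO, Finset.sum_const, Finset.card_univ,
      Fintype.card_fin, nsmul_eq_mul]
    rw [mul_one, show (d:ℝ) * ((1 - ((d:ℝ)-1)⁻¹) * (d:ℝ)⁻¹)
        = (1 - ((d:ℝ)-1)⁻¹) * ((d:ℝ) * (d:ℝ)⁻¹) from by ring,
      mul_inv_cancel₀ hdne, mul_one]
    ring
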